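/- Let L ≥ 1, β > 0, and let γ_1 ≥ γ_2 ≥ … ≥ γ_L > 0. Let β_j ≥ 0 and p_j ≥ 0 for j = 1,…,L, with β_j · p_j > 0 for at least one j. Define R(ρ) := Σ_{j=1}^L β_j · log(1 + p_j · f(γ_j,β,ρ)) for ρ > 0. Then for every ρ > 0, writing g := g(β,ρ), g'(ρ) := −g·(1+g)²/(β + ρ·(1+g)²) and f_j := f(γ_j,β,ρ), the function R is differentiable at ρ with derivative R'(ρ) = (2·(1/g + 1)/(1 + (ρ/β)·(1+g)²)²) · g'(ρ) · Σ_{j=1}^L (β_j · p_j · f_j²/(1 + p_j · f_j)) · (ρ/β − 1/γ_j). -/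

import Mathlib

/-- The deterministic equivalent `g(β,ρ)`: the unique positive solution of
`g·(ρ + β/(1+g)) = 1`, given in closed form. -/
noncomputable def gfun (β ρ : ℝ) : ℝ :=
  ((1 - ρ - β) + Real.sqrt ((ρ + β - 1) ^ 2 + 4 * ρ)) / (2 * ρ)

/-- The limiting SINR coefficient `f(γ,β,ρ)` at effective SNR γ. -/
noncomputable def ffun (γ β ρ : ℝ) : ℝ :=
  gfun β ρ * (γ + (γ * ρ / β) * (1 + gfun β ρ) ^ 2) / (γ + (1 + gfun β ρ) ^ 2)


lemma gfun_quad {β : ℝ} (hβ : 0 < β) {r : ℝ} (hr : 0 < r) :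
    r * gfun β r ^ 2 + (r + β - 1) * gfun β r - 1 = 0 := by
  have hS : (0:ℝ) ≤ (r + β - 1) ^ 2 + 4 * r := by positivity
  set s := Real.sqrt ((r + β - 1) ^ 2 + 4 * r) with hsdef
  have hs : s ^ 2 = (r + β - 1) ^ 2 + 4 * r := Real.sq_sqrt hS
  unfold gfun
  rw [← hsdef]
  have h2r : (2 * r) ≠ 0 := by positivity
  set_option maxHeartbeats 2000000 in
  field_simp
  linear_combination hs

lemma gfun_pos {β : ℝ} (hβ : 0 < β) {r : ℝ} (hr : 0 < r) : 0 < gfun β r := by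
  have hS : (0:ℝ) ≤ (r + β - 1) ^ 2 + 4 * r := by positivity
  have hs : Real.sqrt ((r + β - 1) ^ 2 + 4 * r) ^ 2 = (r + β - 1) ^ 2 + 4 * r :=
    Real.sq_sqrt hS
  have hsn : 0 ≤ Real.sqrt ((r + β - 1) ^ 2 + 4 * r) := Real.sqrt_nonneg _
  unfold gfun
  have : 0 < (1 - r - β) + Real.sqrt ((r + β - 1) ^ 2 + 4 * r) := by nlinarith
  positivity

lemma gfun_diff {β : ℝ} (hβ : 0 < β) {ρ : ℝ} (hρ : 0 < ρ) :
    DifferentiableAt ℝ (fun r => gfun β r) ρ := by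
  have hS : (0:ℝ) < (ρ + β - 1) ^ 2 + 4 * ρ := by positivity
  have ha : HasDerivAt (fun r : ℝ => r + β - 1) 1 ρ := by
    have hfe : (fun r : ℝ => r + β - 1) = fun x : ℝ => x + (β - 1) := by funext x; ring
    rw [hfe]; simpa using (hasDerivAt_id ρ).add_const (β - 1)
  have h1 : HasDerivAt (fun r : ℝ => (r + β - 1) ^ 2 + 4 * r)
      (2 * (ρ + β - 1) ^ 1 * 1 + 4) ρ := by
    have h4 : HasDerivAt (fun r : ℝ => (4:ℝ) * r) 4 ρ := by
      simpa using (hasDerivAt_id ρ).const_mul 4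
    exact (ha.pow 2).add h4
  have h2 : HasDerivAt (fun r : ℝ => (1 - r - β) + Real.sqrt ((r + β - 1) ^ 2 + 4 * r))
      (-1 + (2 * (ρ + β - 1) ^ 1 * 1 + 4) / (2 * Real.sqrt ((ρ + β - 1) ^ 2 + 4 * ρ))) ρ := by
    have hb : HasDerivAt (fun r : ℝ => 1 - r - β) (-1) ρ := by
      have hfe : (fun r : ℝ => 1 - r - β) = fun x : ℝ => (1 - β) - x := by funext x; ring
      rw [hfe]; simpa using (hasDerivAt_id ρ).const_sub (1 - β)
    exact hb.add (h1.sqrt (by positivity))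
  have h3 : HasDerivAt (fun r : ℝ => (2:ℝ) * r) 2 ρ := by
    simpa using (hasDerivAt_id ρ).const_mul 2
  exact (h2.div h3 (by positivity)).differentiableAt

lemma gfun_hasDerivAt {β : ℝ} (hβ : 0 < β) {ρ : ℝ} (hρ : 0 < ρ) :
    HasDerivAt (fun r => gfun β r)
      (-(gfun β ρ * (1 + gfun β ρ) ^ 2) / (β + ρ * (1 + gfun β ρ) ^ 2)) ρ := by
  have hg : HasDerivAt (fun r => gfun β r) (deriv (fun r => gfun β r) ρ) ρ :=
    (gfun_diff hβ hρ).hasDerivAt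
  set d := deriv (fun r => gfun β r) ρ with hd
  set g := gfun β ρ with hgdef
  have ha : HasDerivAt (fun r : ℝ => r + β - 1) 1 ρ := by
    have hfe : (fun r : ℝ => r + β - 1) = fun x : ℝ => x + (β - 1) := by funext x; ring
    rw [hfe]; simpa using (hasDerivAt_id ρ).add_const (β - 1)
  have hφ : HasDerivAt (fun r => r * gfun β r ^ 2 + (r + β - 1) * gfun β r - 1)
      ((1 * g ^ 2 + ρ * (2 * g ^ 1 * d)) + (1 * g + (ρ + β - 1) * d)) ρ := by
    exact (((hasDerivAt_id ρ).mul (hg.pow 2)).add (ha.mul hg)).sub_const 1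
  have hzero : HasDerivAt (fun r => r * gfun β r ^ 2 + (r + β - 1) * gfun β r - 1) 0 ρ := by
    have hev : (fun r => r * gfun β r ^ 2 + (r + β - 1) * gfun β r - 1) =ᶠ[nhds ρ]
        (fun _ => (0:ℝ)) := by
      filter_upwards [eventually_gt_nhds hρ] with r hr using gfun_quad hβ hr
    exact (hasDerivAt_const ρ (0:ℝ)).congr_of_eventuallyEq hev
  have heq : (1 * g ^ 2 + ρ * (2 * g ^ 1 * d)) + (1 * g + (ρ + β - 1) * d) = 0 :=
    hφ.unique hzero
  have hQ : ρ * g ^ 2 + (ρ + β - 1) * g - 1 = 0 := gfun_quad hβ hρ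
  have hgpos : 0 < g := gfun_pos hβ hρ
  have hden : (0:ℝ) < β + ρ * (1 + g) ^ 2 := by positivity
  have hdval : d = -(g * (1 + g) ^ 2) / (β + ρ * (1 + g) ^ 2) := by
    rw [eq_div_iff (ne_of_gt hden)]
    linear_combination (1 + g) * heq + (-d) * hQ
  rw [← hdval]
  exact hg


lemma ffun_hasDerivAt {γ β ρ : ℝ} (hγ : 0 < γ) (hβ : 0 < β) (hρ : 0 < ρ) :
    HasDerivAt (fun r => ffun γ β r)
      ((2 * (1 / gfun β ρ + 1) / (1 + (ρ / β) * (1 + gfun β ρ) ^ 2) ^ 2) *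
        (-(gfun β ρ * (1 + gfun β ρ) ^ 2) / (β + ρ * (1 + gfun β ρ) ^ 2)) *
        (ffun γ β ρ) ^ 2 * (ρ / β - 1 / γ)) ρ := by
  have hg : HasDerivAt (fun r => gfun β r)
      (-(gfun β ρ * (1 + gfun β ρ) ^ 2) / (β + ρ * (1 + gfun β ρ) ^ 2)) ρ :=
    gfun_hasDerivAt hβ hρ
  set gd := -(gfun β ρ * (1 + gfun β ρ) ^ 2) / (β + ρ * (1 + gfun β ρ) ^ 2) with hgd
  set g := gfun β ρ with hgdef
  have h_lin : HasDerivAt (fun r : ℝ => γ * r / β) (γ / β) ρ := by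
    simpa using ((hasDerivAt_id ρ).const_mul γ).div_const β
  have h_sq : HasDerivAt (fun r => (1 + gfun β r) ^ 2) (2 * (1 + g) ^ 1 * gd) ρ :=
    (hg.const_add 1).pow 2
  have hmid : HasDerivAt (fun r => γ + (γ * r / β) * (1 + gfun β r) ^ 2)
      ((γ / β) * (1 + g) ^ 2 + (γ * ρ / β) * (2 * (1 + g) ^ 1 * gd)) ρ :=
    (h_lin.mul h_sq).const_add γ
  have hnum : HasDerivAt (fun r => gfun β r * (γ + (γ * r / β) * (1 + gfun β r) ^ 2))
      (gd * (γ + (γ * ρ / β) * (1 + g) ^ 2) +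
        g * ((γ / β) * (1 + g) ^ 2 + (γ * ρ / β) * (2 * (1 + g) ^ 1 * gd))) ρ :=
    hg.mul hmid
  have hden : HasDerivAt (fun r => γ + (1 + gfun β r) ^ 2) (2 * (1 + g) ^ 1 * gd) ρ :=
    h_sq.const_add γ
  have hdenpos : (0:ℝ) < γ + (1 + g) ^ 2 := by
    have := gfun_pos hβ hρ; rw [← hgdef] at this; positivity
  have hdiv := hnum.div hden (ne_of_gt hdenpos)
  have hfn : (fun r => ffun γ β r) =
      fun r => gfun β r * (γ + (γ * r / β) * (1 + gfun β r) ^ 2) / (γ + (1 + gfun β r) ^ 2) := by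
    funext r; rfl
  rw [hfn]
  refine HasDerivAt.congr_deriv hdiv ?_
  have hgpos : 0 < g := by rw [hgdef]; exact gfun_pos hβ hρ
  have hQ : ρ * g ^ 2 + (ρ + β - 1) * g - 1 = 0 := by rw [hgdef]; exact gfun_quad hβ hρ
  have hbig : (0:ℝ) < β + ρ * (1 + g) ^ 2 := by positivity
  have hpre : (0:ℝ) < 1 + (ρ / β) * (1 + g) ^ 2 := by positivity
  have hffun : ffun γ β ρ = g * (γ + (γ * ρ / β) * (1 + g) ^ 2) / (γ + (1 + g) ^ 2) := rfl
  rw [hffun, hgd]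
  set_option maxHeartbeats 2000000 in
  field_simp
  ring


lemma ffun_pos {γ β ρ : ℝ} (hγ : 0 < γ) (hβ : 0 < β) (hρ : 0 < ρ) : 0 < ffun γ β ρ := by
  have hg : 0 < gfun β ρ := gfun_pos hβ hρ
  have : ffun γ β ρ = gfun β ρ * (γ + (γ * ρ / β) * (1 + gfun β ρ) ^ 2) /
      (γ + (1 + gfun β ρ) ^ 2) := rfl
  rw [this]; positivity


/-- With R(ρ) := Σ_j β_j·log(1 + p_j·f(γ_j,β,ρ)), for every
ρ > 0, writing g := g(β,ρ), g'(ρ) := −g(1+g)²/(β+ρ(1+g)²) and f_j := f(γ_j,β,ρ),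
R is differentiable at ρ with derivative
R'(ρ) = (2(1/g+1)/(1+(ρ/β)(1+g)²)²)·g'(ρ)·Σ_j (β_j p_j f_j²/(1+p_j f_j))·(ρ/β − 1/γ_j). -/
theorem sumRate_hasDerivAt (L : ℕ) (hL : 1 ≤ L) (β : ℝ) (hβ : 0 < β)
    (γ : Fin L → ℝ) (hγpos : ∀ j, 0 < γ j)
    (hγsorted : ∀ i j : Fin L, i ≤ j → γ j ≤ γ i)
    (βv p : Fin L → ℝ) (hβv : ∀ j, 0 ≤ βv j) (hp : ∀ j, 0 ≤ p j)
    (hex : ∃ j, 0 < βv j * p j)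
    (ρ : ℝ) (hρ : 0 < ρ) :
    HasDerivAt (fun r => ∑ j, βv j * Real.log (1 + p j * ffun (γ j) β r))
      ((2 * (1 / gfun β ρ + 1) / (1 + (ρ / β) * (1 + gfun β ρ) ^ 2) ^ 2) *
        (-(gfun β ρ * (1 + gfun β ρ) ^ 2) / (β + ρ * (1 + gfun β ρ) ^ 2)) *
        ∑ j, (βv j * p j * (ffun (γ j) β ρ) ^ 2 / (1 + p j * ffun (γ j) β ρ)) *
          (ρ / β - 1 / γ j)) ρ := by
  set C := (2 * (1 / gfun β ρ + 1) / (1 + (ρ / β) * (1 + gfun β ρ) ^ 2) ^ 2) *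
      (-(gfun β ρ * (1 + gfun β ρ) ^ 2) / (β + ρ * (1 + gfun β ρ) ^ 2)) with hC
  have hterm : ∀ j : Fin L,
      HasDerivAt (fun r => βv j * Real.log (1 + p j * ffun (γ j) β r))
        (βv j * (p j * (C * (ffun (γ j) β ρ) ^ 2 * (ρ / β - 1 / γ j)) /
          (1 + p j * ffun (γ j) β ρ))) ρ := by
    intro j
    have hf := ffun_hasDerivAt (hγpos j) hβ hρ
    have hfpos : 0 < ffun (γ j) β ρ := ffun_pos (hγpos j) hβ hρ
    have h1 : (0:ℝ) < 1 + p j * ffun (γ j) β ρ := by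
      have := mul_nonneg (hp j) hfpos.le; linarith
    exact (((hf.const_mul (p j)).const_add 1).log (ne_of_gt h1)).const_mul (βv j)
  have hsum : HasDerivAt (fun r => ∑ j, βv j * Real.log (1 + p j * ffun (γ j) β r))
      (∑ j, βv j * (p j * (C * (ffun (γ j) β ρ) ^ 2 * (ρ / β - 1 / γ j)) /
        (1 + p j * ffun (γ j) β ρ))) ρ := HasDerivAt.fun_sum fun j _ => hterm j
  convert hsum using 1
  rw [Finset.mul_sum]
  refine Finset.sum_congr rfl fun j _ => ?_
  ring
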